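/- arXiv:2309.13422 — 2 statements merged into one kernel-verified Lean document; each statement's English description precedes it below -/
import Mathlib

section
/- Let ρ₂ be a nonnegative measurable function on (0,∞) with ∫₀^∞ K₀(v) ρ₂(v) dv < ∞. Then for every x>0 the convolution of the constant function 1 with ρ₂ is well-defined and satisfies |(1⋆ρ₂)(x)| ≤ (1/4)∫₀^∞∫₀^∞ |φ(x,u,v)| ρ₂(v) du dv ≤ 2·∫₀^∞ K₀(v) ρ₂(v) dv. -/
open MeasureTheory Real Set

/-- The kernel function φ(x,u,v). -/
noncomputable def phiKer (x u v : ℝ) : ℝ :=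
  Real.exp (-v * Real.cosh (x + u - 1)) + Real.exp (-v * Real.cosh (x - u + 1))
    - Real.exp (-v * Real.cosh (x + u + 1)) - Real.exp (-v * Real.cosh (x - u - 1))

/-- The modified Bessel function of the second kind of order zero. -/
noncomputable def K0 (v : ℝ) : ℝ := ∫ t in Set.Ioi (0 : ℝ), Real.exp (-v * Real.cosh t)

/-- The trigonometric-weighted generalized convolution (f ⋆ g). -/
noncomputable def gconv (f g : ℝ → ℝ) (x : ℝ) : ℝ :=
  (1 / 4) * ∫ v in Set.Ioi (0 : ℝ), ∫ u in Set.Ioi (0 : ℝ), phiKer x u v * f u * g v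

/-- Fourier cosine transform. -/
noncomputable def Fc (f : ℝ → ℝ) (y : ℝ) : ℝ :=
  Real.sqrt (2 / Real.pi) * ∫ x in Set.Ioi (0 : ℝ), f x * Real.cos (x * y)

/-- Fourier sine transform. -/
noncomputable def Fs (f : ℝ → ℝ) (y : ℝ) : ℝ :=
  Real.sqrt (2 / Real.pi) * ∫ x in Set.Ioi (0 : ℝ), f x * Real.sin (x * y)

/-- Modified Bessel function K_{iy}(x). -/
noncomputable def Kiy (y x : ℝ) : ℝ :=
  ∫ u in Set.Ioi (0 : ℝ), Real.exp (-x * Real.cosh u) * Real.cos (y * u)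

/-- Kontorovich–Lebedev transform. -/
noncomputable def KL (g : ℝ → ℝ) (y : ℝ) : ℝ := ∫ x in Set.Ioi (0 : ℝ), Kiy y x * g x

/-- Fourier cosine convolution. -/
noncomputable def fcConv (f g : ℝ → ℝ) (x : ℝ) : ℝ :=
  (1 / Real.sqrt (2 * Real.pi)) * ∫ u in Set.Ioi (0 : ℝ), f u * (g |x - u| + g (x + u))

/-- Fourier sine–cosine generalized convolution. -/
noncomputable def fscConv (f g : ℝ → ℝ) (x : ℝ) : ℝ :=
  (1 / Real.sqrt (2 * Real.pi)) * ∫ u in Set.Ioi (0 : ℝ), f u * (g |x - u| - g (x + u))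

noncomputable def Ek (v t : ℝ) : ℝ := Real.exp (-v * Real.cosh t)

lemma Ek_nonneg (v t : ℝ) : 0 ≤ Ek v t := (Real.exp_pos _).le

lemma Ek_le {v : ℝ} (hv : 0 < v) {t : ℝ} (ht : 0 ≤ t) :
    Ek v t ≤ Real.exp (-(v/2)) * Real.exp (-(v/2) * t) := by
  rw [Ek, ← Real.exp_add]
  apply Real.exp_le_exp.2
  have h1 := Real.add_one_le_exp t
  have h2 : 0 < Real.exp (-t) := Real.exp_pos _
  rw [Real.cosh_eq]
  nlinarith

lemma Ek_intOn_Ioi {v : ℝ} (hv : 0 < v) : IntegrableOn (Ek v) (Ioi 0) := by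
  have hg : IntegrableOn (fun t => Real.exp (-(v/2)) * Real.exp (-(v/2) * t)) (Ioi 0) :=
    (exp_neg_integrableOn_Ioi 0 (by positivity)).const_mul _
  refine Integrable.mono' hg ?_ ?_
  · exact ((Real.continuous_exp.comp ((continuous_const.mul Real.continuous_cosh))).aestronglyMeasurable).restrict
  · filter_upwards [ae_restrict_mem measurableSet_Ioi] with t ht
    rw [Real.norm_eq_abs, abs_of_nonneg (Ek_nonneg v t)]
    exact Ek_le hv ht.le

lemma Ek_integrable {v : ℝ} (hv : 0 < v) : Integrable (Ek v) := by
  have h1 := Ek_intOn_Ioi hv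
  have h2 : IntegrableOn (Ek v) (Iic 0) := by
    rw [← Measure.map_neg_eq_self (volume : Measure ℝ)]
    have m : MeasurableEmbedding fun x : ℝ => -x := (Homeomorph.neg ℝ).measurableEmbedding
    rw [m.integrableOn_map_iff]
    have : (Ek v ∘ fun x : ℝ => -x) = Ek v := by
      funext t; simp [Ek, Real.cosh_neg]
    rw [this]
    simp only [neg_preimage, neg_Iic, neg_zero]
    exact Iff.mpr integrableOn_Ici_iff_integrableOn_Ioi h1
  have := h2.union h1
  rwa [Iic_union_Ioi, integrableOn_univ] at this

lemma Ek_integral_eq {v : ℝ} (hv : 0 < v) : ∫ t, Ek v t = 2 * K0 v := by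
  have h : ∀ t : ℝ, Ek v t = Ek v |t| := fun t => by rw [Ek, Ek, Real.cosh_abs]
  calc ∫ t, Ek v t = ∫ t, Ek v |t| := by simp_rw [← h]
    _ = 2 * ∫ t in Ioi (0:ℝ), Ek v t := integral_comp_abs
    _ = 2 * K0 v := rfl

lemma K0_nonneg (v : ℝ) : 0 ≤ K0 v := integral_nonneg fun t => (Real.exp_pos _).le

lemma Ek_setint_add {v : ℝ} (hv : 0 < v) (c : ℝ) :
    ∫ u in Ioi (0:ℝ), Ek v (u + c) ≤ 2 * K0 v := by
  calc ∫ u in Ioi (0:ℝ), Ek v (u + c) ≤ ∫ u, Ek v (u + c) :=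
        setIntegral_le_integral ((Ek_integrable hv).comp_add_right c)
          (ae_of_all _ fun t => Ek_nonneg v _)
    _ = ∫ u, Ek v u := integral_add_right_eq_self _ c
    _ = 2 * K0 v := Ek_integral_eq hv

lemma Ek_setint_sub {v : ℝ} (hv : 0 < v) (c : ℝ) :
    ∫ u in Ioi (0:ℝ), Ek v (c - u) ≤ 2 * K0 v := by
  calc ∫ u in Ioi (0:ℝ), Ek v (c - u) ≤ ∫ u, Ek v (c - u) :=
        setIntegral_le_integral ((Ek_integrable hv).comp_sub_left c)
          (ae_of_all _ fun t => Ek_nonneg v _)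
    _ = ∫ u, Ek v u := integral_sub_left_eq_self _ _ c
    _ = 2 * K0 v := Ek_integral_eq hv


lemma phiKer_eq (x u v : ℝ) :
    phiKer x u v = Ek v (x + u - 1) + Ek v (x - u + 1) - Ek v (x + u + 1) - Ek v (x - u - 1) := rfl

lemma phiKer_abs_le (x u v : ℝ) :
    |phiKer x u v| ≤ Ek v (x + u - 1) + Ek v (x - u + 1) + Ek v (x + u + 1) + Ek v (x - u - 1) := by
  rw [phiKer_eq]
  have h1 := Ek_nonneg v (x + u - 1)
  have h2 := Ek_nonneg v (x - u + 1)
  have h3 := Ek_nonneg v (x + u + 1)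
  have h4 := Ek_nonneg v (x - u - 1)
  rw [abs_le]; constructor <;> linarith

lemma phi_term_int_add {v : ℝ} (hv : 0 < v) (c : ℝ) :
    IntegrableOn (fun u => Ek v (c + u)) (Ioi (0:ℝ)) := by
  have := ((Ek_integrable hv).comp_add_right c).integrableOn (s := Ioi (0:ℝ))
  simp only [show ∀ u : ℝ, c + u = u + c from fun u => by ring] at this ⊢
  exact this

lemma phi_term_int_sub {v : ℝ} (hv : 0 < v) (c : ℝ) :
    IntegrableOn (fun u => Ek v (c - u)) (Ioi (0:ℝ)) :=
  ((Ek_integrable hv).comp_sub_left c).integrableOn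

lemma phiKer_intOn {v : ℝ} (hv : 0 < v) (x : ℝ) :
    IntegrableOn (fun u => phiKer x u v) (Ioi (0:ℝ)) := by
  have hA := phi_term_int_add hv (x - 1)
  have hB := phi_term_int_sub hv (x + 1)
  have hC := phi_term_int_add hv (x + 1)
  have hD := phi_term_int_sub hv (x - 1)
  have : (fun u => phiKer x u v) =
      fun u => Ek v ((x-1) + u) + Ek v ((x+1) - u) - Ek v ((x+1) + u) - Ek v ((x-1) - u) := by
    funext u
    have e1 : x + u - 1 = (x-1) + u := by ring
    have e2 : x - u + 1 = (x+1) - u := by ring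
    have e3 : x + u + 1 = (x+1) + u := by ring
    have e4 : x - u - 1 = (x-1) - u := by ring
    rw [phiKer_eq, e1, e2, e3, e4]
  rw [this]
  exact ((hA.add hB).sub hC).sub hD

lemma phiKer_setint_abs_le {v : ℝ} (hv : 0 < v) (x : ℝ) :
    ∫ u in Ioi (0:ℝ), |phiKer x u v| ≤ 8 * K0 v := by
  have hA := phi_term_int_add hv (x - 1)
  have hB := phi_term_int_sub hv (x + 1)
  have hC := phi_term_int_add hv (x + 1)
  have hD := phi_term_int_sub hv (x - 1)
  have hsum : IntegrableOn
      (fun u => Ek v ((x-1) + u) + Ek v ((x+1) - u) + Ek v ((x+1) + u) + Ek v ((x-1) - u))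
      (Ioi (0:ℝ)) := ((hA.add hB).add hC).add hD
  have h1 : ∫ u in Ioi (0:ℝ), |phiKer x u v| ≤
      ∫ u in Ioi (0:ℝ), (Ek v ((x-1) + u) + Ek v ((x+1) - u) + Ek v ((x+1) + u) + Ek v ((x-1) - u)) := by
    refine integral_mono ((phiKer_intOn hv x).abs) hsum fun u => ?_
    have := phiKer_abs_le x u v
    have e1 : x + u - 1 = (x-1) + u := by ring
    have e2 : x - u + 1 = (x+1) - u := by ring
    have e3 : x + u + 1 = (x+1) + u := by ring
    have e4 : x - u - 1 = (x-1) - u := by ring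
    rw [e1, e2, e3, e4] at this
    exact this
  have hIA : ∫ u in Ioi (0:ℝ), Ek v ((x-1) + u) ≤ 2 * K0 v := by
    simp only [show ∀ u : ℝ, (x-1) + u = u + (x-1) from fun u => by ring]
    exact Ek_setint_add hv (x-1)
  have hIC : ∫ u in Ioi (0:ℝ), Ek v ((x+1) + u) ≤ 2 * K0 v := by
    simp only [show ∀ u : ℝ, (x+1) + u = u + (x+1) from fun u => by ring]
    exact Ek_setint_add hv (x+1)
  have hIB := Ek_setint_sub hv (x+1)
  have hID := Ek_setint_sub hv (x-1)
  have h2 : ∫ u in Ioi (0:ℝ),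
        (Ek v ((x-1) + u) + Ek v ((x+1) - u) + Ek v ((x+1) + u) + Ek v ((x-1) - u))
      = (∫ u in Ioi (0:ℝ), Ek v ((x-1) + u)) + (∫ u in Ioi (0:ℝ), Ek v ((x+1) - u))
        + (∫ u in Ioi (0:ℝ), Ek v ((x+1) + u)) + (∫ u in Ioi (0:ℝ), Ek v ((x-1) - u)) := by
    have g1 : IntegrableOn (fun u => Ek v ((x-1) + u) + Ek v ((x+1) - u)) (Ioi (0:ℝ)) := hA.add hB
    have g2 : IntegrableOn (fun u => Ek v ((x-1) + u) + Ek v ((x+1) - u) + Ek v ((x+1) + u)) (Ioi (0:ℝ)) := g1.add hC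
    rw [integral_add g2 hD, integral_add g1 hC, integral_add hA hB]
  linarith [h1, h2.le, h2.ge]


theorem gconv_one_bound (ρ₂ : ℝ → ℝ) (hm : Measurable ρ₂)
    (hnn : ∀ v ∈ Set.Ioi (0 : ℝ), 0 ≤ ρ₂ v)
    (hint : MeasureTheory.IntegrableOn (fun v => K0 v * ρ₂ v) (Set.Ioi 0))
    (x : ℝ) (hx : 0 < x) :
    MeasureTheory.IntegrableOn (fun w : ℝ × ℝ => phiKer x w.1 w.2 * (1 : ℝ) * ρ₂ w.2)
      (Set.Ioi 0 ×ˢ Set.Ioi 0) ∧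
    |gconv (fun _ => (1 : ℝ)) ρ₂ x| ≤
      (1 / 4) * (∫ v in Set.Ioi (0 : ℝ), ∫ u in Set.Ioi (0 : ℝ), |phiKer x u v| * ρ₂ v) ∧
    (1 / 4) * (∫ v in Set.Ioi (0 : ℝ), ∫ u in Set.Ioi (0 : ℝ), |phiKer x u v| * ρ₂ v) ≤
      2 * ∫ v in Set.Ioi (0 : ℝ), K0 v * ρ₂ v := by
  have hμ : SFinite ((volume : Measure ℝ).restrict (Ioi 0)) := inferInstance
  set μ := (volume : Measure ℝ).restrict (Ioi 0) with hμdef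
  set F : ℝ × ℝ → ℝ := fun w => phiKer x w.1 w.2 * (1 : ℝ) * ρ₂ w.2 with hFdef
  have hcont : Continuous fun w : ℝ × ℝ => phiKer x w.1 w.2 := by
    unfold phiKer
    fun_prop
  have hFm : AEStronglyMeasurable F (μ.prod μ) :=
    (((hcont.measurable.mul measurable_const).mul
      (hm.comp measurable_snd)).aestronglyMeasurable)
  -- inner-integrand equality for v > 0
  have hinner : ∀ v : ℝ, 0 < v → ∀ u : ℝ, ‖F (u, v)‖ = |phiKer x u v| * ρ₂ v := by
    intro v hv u
    simp only [F, Real.norm_eq_abs, mul_one, abs_mul, abs_of_nonneg (hnn v hv)]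
  have key : Integrable F (μ.prod μ) := by
    rw [integrable_prod_iff' hFm]
    constructor
    · filter_upwards [ae_restrict_mem measurableSet_Ioi] with v hv
      exact ((phiKer_intOn hv x).mul_const 1).mul_const (ρ₂ v)
    · have hG : AEStronglyMeasurable (fun v => ∫ u, ‖F (u, v)‖ ∂μ) μ :=
        (hFm.norm.prod_swap).integral_prod_right'
      refine Integrable.mono' (hint.const_mul 8) hG ?_
      filter_upwards [ae_restrict_mem measurableSet_Ioi] with v hv
      have h0 : 0 ≤ ∫ u, ‖F (u, v)‖ ∂μ := integral_nonneg fun u => norm_nonneg _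
      rw [Real.norm_eq_abs, abs_of_nonneg h0]
      have : ∫ u, ‖F (u, v)‖ ∂μ = (∫ u in Ioi (0:ℝ), |phiKer x u v|) * ρ₂ v := by
        rw [← integral_mul_const]
        exact integral_congr_ae (ae_of_all _ fun u => hinner v hv u)
      rw [this]
      calc (∫ u in Ioi (0:ℝ), |phiKer x u v|) * ρ₂ v ≤ (8 * K0 v) * ρ₂ v :=
            mul_le_mul_of_nonneg_right (phiKer_setint_abs_le hv x) (hnn v hv)
        _ = 8 * (K0 v * ρ₂ v) := by ring
  have hpart1 : MeasureTheory.IntegrableOn F (Set.Ioi 0 ×ˢ Set.Ioi 0) := by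
    rw [IntegrableOn, MeasureTheory.Measure.volume_eq_prod ℝ ℝ, ← Measure.prod_restrict]
    exact key
  refine ⟨hpart1, ?_, ?_⟩
  · -- |gconv| ≤ (1/4) ∫∫ |phi| ρ₂
    set I : ℝ → ℝ := fun v => ∫ u in Ioi (0:ℝ), |phiKer x u v| * ρ₂ v with hIdef
    have hIeq : (fun v => ∫ u, ‖F (u, v)‖ ∂μ) =ᵐ[μ] I := by
      filter_upwards [ae_restrict_mem measurableSet_Ioi] with v hv
      exact integral_congr_ae (ae_of_all _ fun u => hinner v hv u)
    have hI_int : Integrable I μ :=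
      (((integrable_prod_iff' hFm).mp key).2).congr hIeq
    have habs : |gconv (fun _ => (1:ℝ)) ρ₂ x| =
        (1/4) * |∫ v in Ioi (0:ℝ), ∫ u in Ioi (0:ℝ), phiKer x u v * 1 * ρ₂ v| := by
      rw [gconv, abs_mul]
      norm_num
    rw [habs]
    have hJI : ∫ v in Ioi (0:ℝ), |∫ u in Ioi (0:ℝ), phiKer x u v * 1 * ρ₂ v| ≤
        ∫ v in Ioi (0:ℝ), I v := by
      refine integral_mono_of_nonneg (ae_of_all _ fun v => abs_nonneg _) hI_int ?_
      filter_upwards [ae_restrict_mem measurableSet_Ioi] with v hv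
      calc |∫ u in Ioi (0:ℝ), phiKer x u v * 1 * ρ₂ v|
          ≤ ∫ u in Ioi (0:ℝ), ‖phiKer x u v * 1 * ρ₂ v‖ := by
            simpa only [Real.norm_eq_abs] using
              norm_integral_le_integral_norm (μ := μ) (fun u => phiKer x u v * 1 * ρ₂ v)
        _ = I v := integral_congr_ae (ae_of_all _ fun u => hinner v hv u)
    have h4 : |∫ v in Ioi (0:ℝ), ∫ u in Ioi (0:ℝ), phiKer x u v * 1 * ρ₂ v| ≤
        ∫ v in Ioi (0:ℝ), I v := by
      have h5 := norm_integral_le_integral_norm (μ := μ)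
        (fun v => ∫ u in Ioi (0:ℝ), phiKer x u v * 1 * ρ₂ v)
      simp only [Real.norm_eq_abs] at h5
      exact h5.trans hJI
    have := mul_le_mul_of_nonneg_left h4 (by norm_num : (0:ℝ) ≤ 1/4)
    exact this
  · -- (1/4) ∫ I ≤ 2 ∫ K0 ρ₂
    have hmono : ∫ v in Ioi (0:ℝ), (∫ u in Ioi (0:ℝ), |phiKer x u v| * ρ₂ v) ≤
        ∫ v in Ioi (0:ℝ), 8 * (K0 v * ρ₂ v) := by
      refine integral_mono_of_nonneg ?_ (hint.const_mul 8) ?_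
      · filter_upwards [ae_restrict_mem measurableSet_Ioi] with v hv
        exact integral_nonneg fun u => mul_nonneg (abs_nonneg _) (hnn v hv)
      · filter_upwards [ae_restrict_mem measurableSet_Ioi] with v hv
        rw [integral_mul_const]
        calc (∫ u in Ioi (0:ℝ), |phiKer x u v|) * ρ₂ v ≤ (8 * K0 v) * ρ₂ v :=
              mul_le_mul_of_nonneg_right (phiKer_setint_abs_le hv x) (hnn v hv)
          _ = 8 * (K0 v * ρ₂ v) := by ring
    rw [integral_const_mul] at hmono
    linarith
end

section
/- If φ and g are integrable on (0,∞), then the Fourier sine–cosine generalized convolution φ ∗_{F_s,F_c} g is integrable on (0,∞) and ‖φ ∗_{F_s,F_c} g‖_{L_1(0,∞)} ≤ 2√(2/π)·‖φ‖_{L_1(0,∞)}·‖g‖_{L_1(0,∞)}. -/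
open MeasureTheory Real Set

lemma convL1 (f g : ℝ → ℝ) (hf : Integrable f (volume : Measure ℝ))
    (hg : Integrable g (volume : Measure ℝ)) :
    Integrable (fun x => ∫ u, f u * g (x - u)) volume ∧
    (∀ᵐ x : ℝ, Integrable (fun u => f u * g (x - u)) volume) ∧
    (∫ x, |∫ u, f u * g (x - u)|) ≤ (∫ x, |f x|) * (∫ x, |g x|) := by
  set L : ℝ →L[ℝ] ℝ →L[ℝ] ℝ := ContinuousLinearMap.mul ℝ ℝ with hL
  have hconv : Integrable (fun x => ∫ u, f u * g (x - u)) volume := by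
    have := hf.integrable_convolution L hg
    refine this.congr (Filter.Eventually.of_forall fun x => ?_)
    simp [convolution_def, hL]
  have hae : ∀ᵐ x : ℝ, Integrable (fun u => f u * g (x - u)) volume := by
    filter_upwards [hf.ae_convolution_exists (L := L) (μ := volume) (ν := volume) hg] with x hx
    simpa [ConvolutionExistsAt, hL] using hx
  refine ⟨hconv, hae, ?_⟩
  have habs : Integrable (fun p : ℝ × ℝ => |f p.2| * |g (p.1 - p.2)|)
      ((volume : Measure ℝ).prod volume) := by
    have := (hf.abs).convolution_integrand L (hg.abs)
    simpa [hL] using this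
  have hright : Integrable (fun x => ∫ u, |f u| * |g (x - u)|) volume :=
    habs.integral_prod_left
  have step1 : (∫ x, |∫ u, f u * g (x - u)|) ≤ ∫ x, ∫ u, |f u| * |g (x - u)| := by
    refine integral_mono hconv.abs hright (fun x => ?_)
    calc |∫ u, f u * g (x - u)| ≤ ∫ u, |f u * g (x - u)| := by
          have := norm_integral_le_integral_norm (μ := (volume : Measure ℝ)) (fun u => f u * g (x - u))
          simp only [Real.norm_eq_abs] at this
          exact this
      _ = ∫ u, |f u| * |g (x - u)| := by simp [abs_mul]
  refine step1.trans (le_of_eq ?_)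
  rw [integral_integral_swap habs]
  have : ∀ u : ℝ, (∫ x, |f u| * |g (x - u)|) = |f u| * ∫ x, |g x| := by
    intro u
    rw [integral_const_mul]
    congr 1
    exact integral_sub_right_eq_self (fun x => |g x|) u
  simp_rw [this]
  rw [integral_mul_const]

theorem fscConv_L1_bound (Φ g : ℝ → ℝ)
    (hΦ : MeasureTheory.IntegrableOn Φ (Set.Ioi 0))
    (hg : MeasureTheory.IntegrableOn g (Set.Ioi 0)) :
    MeasureTheory.IntegrableOn (fscConv Φ g) (Set.Ioi 0) ∧
    (∫ x in Set.Ioi (0 : ℝ), |fscConv Φ g x|) ≤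
      2 * Real.sqrt (2 / Real.pi) * (∫ x in Set.Ioi (0 : ℝ), |Φ x|) *
        (∫ x in Set.Ioi (0 : ℝ), |g x|) := by
  classical
  set Φ' : ℝ → ℝ := hΦ.1.mk Φ with hΦ'def
  set g' : ℝ → ℝ := hg.1.mk g with hg'def
  set F : ℝ → ℝ := (Set.Ioi (0:ℝ)).indicator Φ' with hFdef
  set G : ℝ → ℝ := (Set.Ioi (0:ℝ)).indicator g' with hGdef
  have hΦae : Φ =ᵐ[volume.restrict (Set.Ioi 0)] Φ' := hΦ.1.ae_eq_mk
  have hgae : g =ᵐ[volume.restrict (Set.Ioi 0)] g' := hg.1.ae_eq_mk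
  have hF : Integrable F volume := by
    rw [hFdef, integrable_indicator_iff measurableSet_Ioi]
    exact hΦ.congr hΦae
  have hG : Integrable G volume := by
    rw [hGdef, integrable_indicator_iff measurableSet_Ioi]
    exact hg.congr hgae
  -- the exceptional set
  set S : Set ℝ := {t : ℝ | t ∈ Set.Ioi (0:ℝ) ∧ g t ≠ g' t} with hSdef
  have hS : volume S = 0 := by
    have h := (ae_restrict_iff' measurableSet_Ioi).mp hgae
    rw [ae_iff] at h
    refine measure_mono_null (fun t ht => ?_) h
    simp only [hSdef, Set.mem_setOf_eq] at ht ⊢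
    tauto
  -- step 1 : fscConv Φ g = fscConv F G on Ioi 0
  have hGF : ∀ x ∈ Set.Ioi (0:ℝ), fscConv Φ g x = fscConv F G x := by
    intro x hx
    unfold fscConv
    congr 1
    refine setIntegral_congr_ae measurableSet_Ioi ?_
    have h1 : ∀ᵐ u : ℝ, u ∈ Set.Ioi (0:ℝ) → Φ u = F u := by
      filter_upwards [(ae_restrict_iff' measurableSet_Ioi).mp hΦae] with u hu hmem
      rw [hu hmem, hFdef, Set.indicator_of_mem hmem]
    have h2 : ∀ᵐ u : ℝ, x + u ∉ S := by
      rw [ae_iff]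
      have : volume ((fun u : ℝ => x + u) ⁻¹' S) = 0 := by
        rw [measure_preimage_add]; exact hS
      simpa [Set.preimage] using this
    have h3 : ∀ᵐ u : ℝ, x - u ∉ S := by
      rw [ae_iff]
      have hpre : ((fun u : ℝ => x - u) ⁻¹' S) = Neg.neg ⁻¹' ((fun v : ℝ => x + v) ⁻¹' S) := by
        ext u; simp [sub_eq_add_neg]
      have hnm : NullMeasurableSet ((fun v : ℝ => x + v) ⁻¹' S) volume :=
        NullMeasurableSet.of_null (by rw [measure_preimage_add]; exact hS)
      have : volume ((fun u : ℝ => x - u) ⁻¹' S) = 0 := by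
        rw [hpre, (Measure.measurePreserving_neg (volume : Measure ℝ)).measure_preimage hnm,
          measure_preimage_add]
        exact hS
      simpa [Set.preimage] using this
    have h4 : ∀ᵐ u : ℝ, u - x ∉ S := by
      rw [ae_iff]
      have : volume ((fun u : ℝ => u + (-x)) ⁻¹' S) = 0 := by
        rw [measure_preimage_add_right]; exact hS
      simpa [Set.preimage, sub_eq_add_neg] using this
    have h5 : ∀ᵐ u : ℝ, u ≠ x := by
      rw [ae_iff]
      simpa using measure_singleton (α := ℝ) x
    filter_upwards [h1, h2, h3, h4, h5] with u hu1 hu2 hu3 hu4 hu5 hmem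
    have hxu : x + u ∈ Set.Ioi (0:ℝ) := by
      simp only [Set.mem_Ioi] at *; linarith
    have hgxu : g (x + u) = G (x + u) := by
      have : g (x + u) = g' (x + u) := by
        by_contra h; exact hu2 ⟨hxu, h⟩
      rw [this, hGdef, Set.indicator_of_mem hxu]
    have habsmem : |x - u| ∈ Set.Ioi (0:ℝ) := by
      simp only [Set.mem_Ioi, abs_pos, sub_ne_zero]
      exact fun h => hu5 h.symm
    have hgabs : g |x - u| = G |x - u| := by
      have hne : g |x - u| = g' |x - u| := by
        by_contra h
        rcases abs_cases (x - u) with ⟨hc, _⟩ | ⟨hc, _⟩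
        · exact hu3 ⟨by rw [← hc]; exact habsmem, by rw [← hc]; exact h⟩
        · rw [neg_sub] at hc
          exact hu4 ⟨by rw [← hc]; exact habsmem, by rw [← hc]; exact h⟩
      rw [hne, hGdef, Set.indicator_of_mem habsmem]
    rw [hu1 hmem, hgxu, hgabs]
  -- step 2 : express fscConv F G via three convolutions
  obtain ⟨hA1, hA2, hA3⟩ := convL1 F G hF hG
  obtain ⟨hB1, hB2, hB3⟩ := convL1 F (fun t => G (-t)) hF hG.comp_neg
  obtain ⟨hC1, hC2, hC3⟩ := convL1 (fun t => F (-t)) G hF.comp_neg hG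
  set A : ℝ → ℝ := fun x => ∫ u, F u * G (x - u) with hAdef
  set B : ℝ → ℝ := fun x => ∫ u, F u * G (-(x - u)) with hBdef
  set C : ℝ → ℝ := fun x => ∫ u, F (-u) * G (x - u) with hCdef
  set c : ℝ := 1 / Real.sqrt (2 * Real.pi) with hcdef
  have hc0 : 0 ≤ c := by positivity
  set D : ℝ → ℝ := fun x => c * (A x + B x - C x) with hDdef
  have hD : Integrable D volume := (((hA1.add hB1).sub hC1).const_mul c)
  have key : ∀ᵐ x : ℝ, fscConv F G x = D x := by
    filter_upwards [hA2, hB2, hC2] with x hxA hxB hxC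
    have hxC' : Integrable (fun u => F u * G (x + u)) volume := by
      have := hxC.comp_neg
      simpa [sub_neg_eq_add] using this
    have eC : (∫ u, F u * G (x + u)) = C x := by
      have := integral_neg_eq_self (μ := (volume : Measure ℝ)) (fun u => F (-u) * G (x - u))
      simpa [sub_neg_eq_add] using this
    have Gabs : ∀ t : ℝ, G |t| = G t + G (-t) := by
      intro t
      rcases lt_trichotomy t 0 with ht | ht | ht
      · rw [abs_of_neg ht, hGdef,
          Set.indicator_of_notMem (by simpa using ht.le : t ∉ Set.Ioi (0:ℝ))]
        ring
      · simp [ht, hGdef]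
      · rw [abs_of_pos ht, hGdef,
          Set.indicator_of_notMem (by simpa using ht.le : -t ∉ Set.Ioi (0:ℝ))]
        ring
    have e1 : (∫ u in Set.Ioi (0:ℝ), F u * (G |x - u| - G (x + u)))
        = ∫ u, F u * (G |x - u| - G (x + u)) := by
      refine setIntegral_eq_integral_of_forall_compl_eq_zero (fun u hu => ?_)
      rw [hFdef, Set.indicator_of_notMem hu]
      ring
    have hsum : Integrable (fun u => F u * G (x - u) + F u * G (-(x - u))) volume :=
      hxA.add hxB
    have e2 : (∫ u, F u * (G |x - u| - G (x + u)))
        = (∫ u, F u * G (x - u) + F u * G (-(x - u))) - ∫ u, F u * G (x + u) := by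
      rw [← integral_sub hsum hxC']
      congr 1
      funext u
      rw [Gabs (x - u)]
      ring
    show (1 / Real.sqrt (2 * Real.pi)) * (∫ u in Set.Ioi (0:ℝ), F u * (G |x - u| - G (x + u)))
        = c * (A x + B x - C x)
    rw [e1, e2, integral_add hxA hxB, eC, ← hcdef]
  have hres : fscConv Φ g =ᵐ[volume.restrict (Set.Ioi 0)] D := by
    have h₁ : fscConv Φ g =ᶠ[MeasureTheory.ae (volume.restrict (Set.Ioi (0:ℝ)))] fscConv F G :=
      (ae_restrict_iff' measurableSet_Ioi).mpr (Filter.Eventually.of_forall hGF)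
    have h₂ : fscConv F G =ᶠ[MeasureTheory.ae (volume.restrict (Set.Ioi (0:ℝ)))] D :=
      ae_restrict_of_ae key
    exact h₁.trans h₂
  constructor
  · exact (hD.integrableOn (s := Set.Ioi 0)).congr hres.symm
  -- the bound
  have e3 : (∫ x in Set.Ioi (0:ℝ), |fscConv Φ g x|) = ∫ x in Set.Ioi (0:ℝ), |D x| :=
    integral_congr_ae (hres.fun_comp abs)
  have e4 : (∫ x in Set.Ioi (0:ℝ), |D x|) ≤ ∫ x, |D x| :=
    setIntegral_le_integral hD.abs (Filter.Eventually.of_forall fun x => abs_nonneg _)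
  have e5 : (∫ x, |D x|) ≤ c * ((∫ x, |A x|) + (∫ x, |B x|) + (∫ x, |C x|)) := by
    have h67 : Integrable (fun x => |A x| + |B x|) volume := hA1.abs.add hB1.abs
    have h68 : Integrable (fun x => |A x| + |B x| + |C x|) volume := h67.add hC1.abs
    have hRint : Integrable (fun x => c * (|A x| + |B x| + |C x|)) volume := h68.const_mul c
    have := integral_mono hD.abs hRint (fun x => ?_)
    · rw [integral_const_mul, integral_add h67 hC1.abs,
        integral_add hA1.abs hB1.abs] at this
      exact this
    · rw [hDdef]
      simp only [abs_mul, abs_of_nonneg hc0]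
      have : |A x + B x - C x| ≤ |A x| + |B x| + |C x| := by
        calc |A x + B x - C x| ≤ |A x + B x| + |C x| := abs_sub _ _
          _ ≤ |A x| + |B x| + |C x| := by gcongr; exact abs_add_le _ _
      nlinarith [abs_nonneg (A x + B x - C x)]
  -- bound each convolution
  set IF : ℝ := ∫ x, |F x| with hIFdef
  set IG : ℝ := ∫ x, |G x| with hIGdef
  have hIF0 : 0 ≤ IF := integral_nonneg fun x => abs_nonneg _
  have hIG0 : 0 ≤ IG := integral_nonneg fun x => abs_nonneg _
  have hBnorm : (∫ x, |G (-x)|) = IG := integral_neg_eq_self (fun x => |G x|) _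
  have hCnorm : (∫ x, |F (-x)|) = IF := integral_neg_eq_self (fun x => |F x|) _
  have hAle : (∫ x, |A x|) ≤ IF * IG := hA3
  have hBle : (∫ x, |B x|) ≤ IF * IG := by
    rw [← hBnorm]; exact hB3
  have hCle : (∫ x, |C x|) ≤ IF * IG := by
    rw [← hCnorm]; exact hC3
  -- identify IF, IG with the integrals of Φ, g
  have hIFeq : IF = ∫ x in Set.Ioi (0:ℝ), |Φ x| := by
    rw [hIFdef]
    have : (fun x => |F x|) = (Set.Ioi (0:ℝ)).indicator fun x => |Φ' x| := by
      funext x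
      rw [hFdef]
      by_cases hx : x ∈ Set.Ioi (0:ℝ)
      · simp [Set.indicator_of_mem hx]
      · simp [Set.indicator_of_notMem hx]
    rw [this, integral_indicator measurableSet_Ioi]
    exact integral_congr_ae ((hΦae.fun_comp abs).symm)
  have hIGeq : IG = ∫ x in Set.Ioi (0:ℝ), |g x| := by
    rw [hIGdef]
    have : (fun x => |G x|) = (Set.Ioi (0:ℝ)).indicator fun x => |g' x| := by
      funext x
      rw [hGdef]
      by_cases hx : x ∈ Set.Ioi (0:ℝ)
      · simp [Set.indicator_of_mem hx]
      · simp [Set.indicator_of_notMem hx]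
    rw [this, integral_indicator measurableSet_Ioi]
    exact integral_congr_ae ((hgae.fun_comp abs).symm)
  -- numeric : 3 * c ≤ 2 * sqrt (2 / π)
  have hnum : 3 * c ≤ 2 * Real.sqrt (2 / Real.pi) := by
    have hπ : 0 < Real.pi := Real.pi_pos
    have hs : Real.sqrt (2 / Real.pi) * Real.sqrt (2 * Real.pi) = 2 := by
      rw [← Real.sqrt_mul (by positivity)]
      rw [show (2 / Real.pi) * (2 * Real.pi) = 4 by field_simp; ring]
      rw [show (4:ℝ) = 2 ^ 2 by norm_num, Real.sqrt_sq (by norm_num)]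
    have hsp : 0 < Real.sqrt (2 * Real.pi) := Real.sqrt_pos.mpr (by positivity)
    have hc' : c * Real.sqrt (2 * Real.pi) = 1 := by
      rw [hcdef]; field_simp
    nlinarith [Real.sqrt_nonneg (2 / Real.pi), hsp, hs, hc']
  calc (∫ x in Set.Ioi (0:ℝ), |fscConv Φ g x|)
      = ∫ x in Set.Ioi (0:ℝ), |D x| := e3
    _ ≤ ∫ x, |D x| := e4
    _ ≤ c * ((∫ x, |A x|) + (∫ x, |B x|) + (∫ x, |C x|)) := e5
    _ ≤ c * (3 * (IF * IG)) := by
        have : (∫ x, |A x|) + (∫ x, |B x|) + (∫ x, |C x|) ≤ 3 * (IF * IG) := by linarith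
        exact mul_le_mul_of_nonneg_left this hc0
    _ ≤ 2 * Real.sqrt (2 / Real.pi) * IF * IG := by
        nlinarith [mul_nonneg hIF0 hIG0, hnum, hc0]
    _ = 2 * Real.sqrt (2 / Real.pi) * (∫ x in Set.Ioi (0:ℝ), |Φ x|) *
        (∫ x in Set.Ioi (0:ℝ), |g x|) := by rw [hIFeq, hIGeq]
end
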